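/- Join-node convolution identity for perfect matchings: let G₁ = (V, E₁) and G₂ = (V, E₂) be graphs on the same vertex set with E₁ ∩ E₂ = ∅, all edges of E₁ contained in A ∪ S and all edges of E₂ contained in B ∪ S, where V = A ∪ S ∪ B is a partition. For X ⊆ S, let f₁(X) = number of perfect matchings of the subgraph of G₁ induced on A ∪ X, f₂(X) = number of perfect matchings of the subgraph of G₂ induced on B ∪ X, and f(X) = number of perfect matchings of the subgraph of (V, E₁ ∪ E₂) induced on A ∪ B ∪ X. Then f(X) = ∑_{X' ⊆ X} f₁(X') · f₂(X \ X'). -/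

import Mathlib

/-- The number of perfect matchings of the graph with edge set `E` induced on
the vertex set `W`: sets of edges of `E` lying inside `W` covering every
vertex of `W` exactly once. -/
noncomputable def pmCount {V : Type*} [Fintype V] [DecidableEq V]
    (E : Finset (Sym2 V)) (W : Finset V) : ℕ :=
  ({M : Finset (Sym2 V) | M ⊆ E ∧ (∀ e ∈ M, ∀ v ∈ e, v ∈ W) ∧
      ∀ v ∈ W, ∃! e, e ∈ M ∧ v ∈ e} : Set (Finset (Sym2 V))).ncard

section aux

variable {V : Type*} [Fintype V] [DecidableEq V]

def isPM (E M : Finset (Sym2 V)) (W : Finset V) : Prop :=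
  M ⊆ E ∧ (∀ e ∈ M, ∀ v ∈ e, v ∈ W) ∧ ∀ v ∈ W, ∃! e, e ∈ M ∧ v ∈ e

open Classical in
lemma pmCount_eq (E : Finset (Sym2 V)) (W : Finset V) :
    pmCount E W = (Finset.univ.filter (fun M => isPM E M W)).card := by
  rw [pmCount, ← Set.ncard_coe_finset]
  congr 1
  ext M
  rw [Finset.mem_coe, Finset.mem_filter]; simp [isPM]

end aux

theorem pm_join_convolution {V : Type*} [Fintype V] [DecidableEq V]
    (E₁ E₂ : Finset (Sym2 V)) (A S B : Finset V)
    (hE : Disjoint E₁ E₂)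
    (hloop : ∀ e ∈ E₁ ∪ E₂, ¬ e.IsDiag)
    (hAS : Disjoint A S) (hAB : Disjoint A B) (hSB : Disjoint S B)
    (hcover : A ∪ S ∪ B = Finset.univ)
    (hE₁ : ∀ e ∈ E₁, ∀ v ∈ e, v ∈ A ∪ S)
    (hE₂ : ∀ e ∈ E₂, ∀ v ∈ e, v ∈ B ∪ S) :
    ∀ X : Finset V, X ⊆ S →
      pmCount (E₁ ∪ E₂) (A ∪ B ∪ X)
        = ∑ X' ∈ X.powerset,
            pmCount E₁ (A ∪ X') * pmCount E₂ (B ∪ (X \ X')) := by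
  classical
  intro X hX
  -- basic disjointness facts
  have hAX : Disjoint A X := hAS.mono_right hX
  have hXB : Disjoint X B := hSB.mono_left hX
  -- the fiber map
  set f : Finset (Sym2 V) → Finset V :=
    fun M => X.filter (fun v => ∃ e ∈ M ∩ E₁, v ∈ e) with hf
  -- splitting lemma
  have split : ∀ M : Finset (Sym2 V), isPM (E₁ ∪ E₂) M (A ∪ B ∪ X) →
      isPM E₁ (M ∩ E₁) (A ∪ f M) ∧ isPM E₂ (M ∩ E₂) (B ∪ (X \ f M)) := by
    intro M hM
    obtain ⟨hMsub, hMin, hMcov⟩ := hM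
    constructor
    · refine ⟨Finset.inter_subset_right, ?_, ?_⟩
      · intro e he v hv
        have h1 : v ∈ A ∪ S := hE₁ e (Finset.mem_inter.1 he).2 v hv
        have h2 : v ∈ A ∪ B ∪ X := hMin e (Finset.mem_inter.1 he).1 v hv
        rw [Finset.mem_union] at h1 ⊢
        rcases h1 with h1 | h1
        · exact Or.inl h1
        · right
          rw [hf, Finset.mem_filter]
          rcases Finset.mem_union.1 h2 with h2 | h2
          · rcases Finset.mem_union.1 h2 with h2 | h2
            · exact (Finset.disjoint_left.1 hAS h2 h1).elim
            · exact (Finset.disjoint_left.1 hSB h1 h2).elim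
          · exact ⟨h2, e, he, hv⟩
      · intro v hv
        rcases Finset.mem_union.1 hv with hv | hv
        · -- v ∈ A
          have hv' : v ∈ A ∪ B ∪ X := by simp [hv]
          obtain ⟨e, ⟨heM, hev⟩, huniq⟩ := hMcov v hv'
          have heE1 : e ∈ E₁ := by
            rcases Finset.mem_union.1 (hMsub heM) with h | h
            · exact h
            · have := hE₂ e h v hev
              rcases Finset.mem_union.1 this with h' | h'
              · exact absurd hv (fun hv => Finset.disjoint_left.1 hAB hv h')
              · exact absurd hv (fun hv => Finset.disjoint_left.1 hAS hv h')
          exact ⟨e, ⟨Finset.mem_inter.2 ⟨heM, heE1⟩, hev⟩,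
            fun e' ⟨he', hv'⟩ => huniq e' ⟨(Finset.mem_inter.1 he').1, hv'⟩⟩
        · -- v ∈ f M
          rw [hf, Finset.mem_filter] at hv
          obtain ⟨hvX, e, heM, hev⟩ := hv
          have hv' : v ∈ A ∪ B ∪ X := by simp [hvX]
          obtain ⟨e₀, _, huniq⟩ := hMcov v hv'
          refine ⟨e, ⟨heM, hev⟩, fun e' ⟨he', hv''⟩ => ?_⟩
          rw [huniq e' ⟨(Finset.mem_inter.1 he').1, hv''⟩,
            huniq e ⟨(Finset.mem_inter.1 heM).1, hev⟩]
    · refine ⟨Finset.inter_subset_right, ?_, ?_⟩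
      · intro e he v hv
        have h1 : v ∈ B ∪ S := hE₂ e (Finset.mem_inter.1 he).2 v hv
        have h2 : v ∈ A ∪ B ∪ X := hMin e (Finset.mem_inter.1 he).1 v hv
        rw [Finset.mem_union] at h1 ⊢
        rcases h1 with h1 | h1
        · exact Or.inl h1
        · right
          have hvX : v ∈ X := by
            rcases Finset.mem_union.1 h2 with h2 | h2
            · rcases Finset.mem_union.1 h2 with h2 | h2
              · exact absurd h1 (fun h1 => Finset.disjoint_left.1 hAS h2 h1)
              · exact absurd h1 (fun h1 => Finset.disjoint_left.1 hSB h1 h2)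
            · exact h2
          rw [Finset.mem_sdiff]
          refine ⟨hvX, fun hvf => ?_⟩
          rw [hf, Finset.mem_filter] at hvf
          obtain ⟨_, e', he', hve'⟩ := hvf
          have hv' : v ∈ A ∪ B ∪ X := by simp [hvX]
          obtain ⟨e₀, _, huniq⟩ := hMcov v hv'
          have h1' := huniq e ⟨(Finset.mem_inter.1 he).1, hv⟩
          have h2' := huniq e' ⟨(Finset.mem_inter.1 he').1, hve'⟩
          have : e = e' := h1'.trans h2'.symm
          subst this
          exact Finset.disjoint_left.1 hE (Finset.mem_inter.1 he').2 (Finset.mem_inter.1 he).2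
      · intro v hv
        rcases Finset.mem_union.1 hv with hv | hv
        · -- v ∈ B
          have hv' : v ∈ A ∪ B ∪ X := by simp [hv]
          obtain ⟨e, ⟨heM, hev⟩, huniq⟩ := hMcov v hv'
          have heE2 : e ∈ E₂ := by
            rcases Finset.mem_union.1 (hMsub heM) with h | h
            · have := hE₁ e h v hev
              rcases Finset.mem_union.1 this with h' | h'
              · exact absurd hv (fun hv => Finset.disjoint_left.1 hAB h' hv)
              · exact absurd hv (fun hv => Finset.disjoint_left.1 hSB h' hv)
            · exact h
          exact ⟨e, ⟨Finset.mem_inter.2 ⟨heM, heE2⟩, hev⟩,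
            fun e' ⟨he', hv''⟩ => huniq e' ⟨(Finset.mem_inter.1 he').1, hv''⟩⟩
        · -- v ∈ X \ f M
          obtain ⟨hvX, hvf⟩ := Finset.mem_sdiff.1 hv
          have hv' : v ∈ A ∪ B ∪ X := by simp [hvX]
          obtain ⟨e, ⟨heM, hev⟩, huniq⟩ := hMcov v hv'
          have heE2 : e ∈ E₂ := by
            rcases Finset.mem_union.1 (hMsub heM) with h | h
            · exfalso
              apply hvf
              rw [hf, Finset.mem_filter]
              exact ⟨hvX, e, Finset.mem_inter.2 ⟨heM, h⟩, hev⟩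
            · exact h
          exact ⟨e, ⟨Finset.mem_inter.2 ⟨heM, heE2⟩, hev⟩,
            fun e' ⟨he', hv''⟩ => huniq e' ⟨(Finset.mem_inter.1 he').1, hv''⟩⟩
  -- joining lemma
  have join : ∀ X' ∈ X.powerset, ∀ M₁ M₂ : Finset (Sym2 V),
      isPM E₁ M₁ (A ∪ X') → isPM E₂ M₂ (B ∪ (X \ X')) →
      isPM (E₁ ∪ E₂) (M₁ ∪ M₂) (A ∪ B ∪ X) ∧ f (M₁ ∪ M₂) = X' := by
    intro X' hX' M₁ M₂ h1 h2
    rw [Finset.mem_powerset] at hX'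
    obtain ⟨h1sub, h1in, h1cov⟩ := h1
    obtain ⟨h2sub, h2in, h2cov⟩ := h2
    have hM12 : Disjoint M₁ M₂ := hE.mono h1sub h2sub
    -- no edge of M₂ covers a vertex of A ∪ X'
    have hno2 : ∀ v ∈ A ∪ X', ∀ e ∈ M₂, v ∉ e := by
      intro v hv e he hve
      have := h2in e he v hve
      rcases Finset.mem_union.1 this with h | h
      · rcases Finset.mem_union.1 hv with hv | hv
        · exact Finset.disjoint_left.1 hAB hv h
        · exact Finset.disjoint_left.1 hXB (hX' hv) h
      · obtain ⟨hvX, hvX'⟩ := Finset.mem_sdiff.1 h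
        rcases Finset.mem_union.1 hv with hv | hv
        · exact Finset.disjoint_left.1 hAX hv hvX
        · exact hvX' hv
    have hno1 : ∀ v ∈ B ∪ (X \ X'), ∀ e ∈ M₁, v ∉ e := by
      intro v hv e he hve
      have := h1in e he v hve
      rcases Finset.mem_union.1 this with h | h
      · rcases Finset.mem_union.1 hv with hv | hv
        · exact Finset.disjoint_left.1 hAB h hv
        · exact Finset.disjoint_left.1 hAX h (Finset.mem_sdiff.1 hv).1
      · rcases Finset.mem_union.1 hv with hv | hv
        · exact Finset.disjoint_left.1 hXB (hX' h) hv
        · exact (Finset.mem_sdiff.1 hv).2 h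
    constructor
    · refine ⟨Finset.union_subset_union h1sub h2sub, ?_, ?_⟩
      · intro e he v hv
        rcases Finset.mem_union.1 he with he | he
        · have := h1in e he v hv
          rcases Finset.mem_union.1 this with h | h
          · simp [h]
          · simp [hX' h]
        · have := h2in e he v hv
          rcases Finset.mem_union.1 this with h | h
          · simp [h]
          · simp [(Finset.mem_sdiff.1 h).1]
      · intro v hv
        have key : (v ∈ A ∪ X') ∨ (v ∈ B ∪ (X \ X')) := by
          rcases Finset.mem_union.1 hv with hv | hv
          · rcases Finset.mem_union.1 hv with hv | hv
            · exact Or.inl (Finset.mem_union_left _ hv)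
            · exact Or.inr (Finset.mem_union_left _ hv)
          · by_cases h : v ∈ X'
            · exact Or.inl (Finset.mem_union_right _ h)
            · exact Or.inr (Finset.mem_union_right _ (Finset.mem_sdiff.2 ⟨hv, h⟩))
        rcases key with hv' | hv'
        · obtain ⟨e, ⟨heM, hev⟩, huniq⟩ := h1cov v hv'
          refine ⟨e, ⟨Finset.mem_union_left _ heM, hev⟩, ?_⟩
          rintro e' ⟨he', hve'⟩
          rcases Finset.mem_union.1 he' with he' | he'
          · exact huniq e' ⟨he', hve'⟩
          · exact absurd hve' (hno2 v hv' e' he')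
        · obtain ⟨e, ⟨heM, hev⟩, huniq⟩ := h2cov v hv'
          refine ⟨e, ⟨Finset.mem_union_right _ heM, hev⟩, ?_⟩
          rintro e' ⟨he', hve'⟩
          rcases Finset.mem_union.1 he' with he' | he'
          · exact absurd hve' (hno1 v hv' e' he')
          · exact huniq e' ⟨he', hve'⟩
    · -- f (M₁ ∪ M₂) = X'
      have hM1E : (M₁ ∪ M₂) ∩ E₁ = M₁ := by
        ext e
        simp only [Finset.mem_inter, Finset.mem_union]
        constructor
        · rintro ⟨h | h, he⟩
          · exact h
          · exact absurd he (fun he => Finset.disjoint_left.1 hE he (h2sub h))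
        · intro h
          exact ⟨Or.inl h, h1sub h⟩
      rw [hf]
      ext v
      simp only [Finset.mem_filter, hM1E]
      constructor
      · rintro ⟨hvX, e, he, hve⟩
        have := h1in e he v hve
        rcases Finset.mem_union.1 this with h | h
        · exact absurd hvX (fun hvX => Finset.disjoint_left.1 hAX h hvX)
        · exact h
      · intro hvX'
        obtain ⟨e, ⟨heM, hev⟩, _⟩ := h1cov v (Finset.mem_union_right _ hvX')
        exact ⟨hX' hvX', e, heM, hev⟩
  -- Now the counting argument
  rw [pmCount_eq]
  rw [Finset.card_eq_sum_card_fiberwise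
    (f := f) (t := X.powerset)
    (fun M hM => Finset.mem_powerset.2 (Finset.filter_subset _ _))]
  refine Finset.sum_congr rfl fun X' hX' => ?_
  rw [pmCount_eq, pmCount_eq, ← Finset.card_product]
  apply Finset.card_bij' (fun M _ => (M ∩ E₁, M ∩ E₂))
    (fun p _ => p.1 ∪ p.2)
  · intro M hM
    simp only [Finset.mem_filter, Finset.mem_univ, true_and] at hM
    obtain ⟨hMpm, hMf⟩ := hM
    have := split M hMpm
    rw [hMf] at this
    simp only [Finset.mem_product, Finset.mem_filter, Finset.mem_univ, true_and]
    exact this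
  · intro p hp
    simp only [Finset.mem_product, Finset.mem_filter, Finset.mem_univ, true_and] at hp
    have := join X' hX' p.1 p.2 hp.1 hp.2
    simp only [Finset.mem_filter, Finset.mem_univ, true_and]
    exact this
  · intro M hM
    simp only [Finset.mem_filter, Finset.mem_univ, true_and] at hM
    have hMsub := hM.1.1
    rw [← Finset.inter_union_distrib_left, Finset.inter_eq_left.2 hMsub]
  · intro p hp
    simp only [Finset.mem_product, Finset.mem_filter, Finset.mem_univ, true_and] at hp
    have h1sub := hp.1.1
    have h2sub := hp.2.1
    have h1 : (p.1 ∪ p.2) ∩ E₁ = p.1 := by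
      ext e
      simp only [Finset.mem_inter, Finset.mem_union]
      constructor
      · rintro ⟨h | h, he⟩
        · exact h
        · exact absurd he (fun he => Finset.disjoint_left.1 hE he (h2sub h))
      · intro h
        exact ⟨Or.inl h, h1sub h⟩
    have h2 : (p.1 ∪ p.2) ∩ E₂ = p.2 := by
      ext e
      simp only [Finset.mem_inter, Finset.mem_union]
      constructor
      · rintro ⟨h | h, he⟩
        · exact absurd (h1sub h) (fun h' => Finset.disjoint_left.1 hE h' he)
        · exact h
      · intro h
        exact ⟨Or.inr h, h2sub h⟩
    simp [h1, h2]
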